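/- The lexicographical product G[G'] is a comparability graph if and only if both G and G' are comparability graphs; moreover in that case R^p(G[G']) = max{R^p(G), R^p(G')}. -/

import Mathlib

section Defs

variable {V : Type*}

/-- Two letters alternate in a word: the subword over `{a,b}` has no equal consecutive letters. -/
def Alternates [DecidableEq V] (w : List V) (a b : V) : Prop :=
  (w.filter (fun x => decide (x = a ∨ x = b))).Chain' (· ≠ ·)

/-- A word over the vertex set represents a graph: every vertex occurs, and two distinct
vertices are adjacent iff they alternate in the word. -/
def Represents [DecidableEq V] (w : List V) (G : SimpleGraph V) : Prop :=
  (∀ v : V, v ∈ w) ∧ ∀ a b : V, a ≠ b → (G.Adj a b ↔ Alternates w a b)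

def WordRepresentable [DecidableEq V] (G : SimpleGraph V) : Prop :=
  ∃ w : List V, Represents w G

/-- Every letter occurs exactly `k` times. -/
def IsKUniform [DecidableEq V] (w : List V) (k : ℕ) : Prop :=
  ∀ v : V, w.count v = k

/-- `k` is the representation number of `G`. -/
def RepNumIs [DecidableEq V] (G : SimpleGraph V) (k : ℕ) : Prop :=
  IsLeast {n : ℕ | ∃ w : List V, IsKUniform w n ∧ Represents w G} k

/-- `p` is a permutation of the vertex set (as a list). -/
def IsPermOn (p : List V) : Prop := p.Nodup ∧ ∀ v : V, v ∈ p

/-- `G` is representable by a concatenation of `k` permutations of its vertex set. -/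
def PermRepresents [DecidableEq V] (G : SimpleGraph V) (k : ℕ) : Prop :=
  ∃ ps : List (List V), ps.length = k ∧ (∀ p ∈ ps, IsPermOn p) ∧ Represents ps.flatten G

/-- `k` is the permutation-representation number of `G`. -/
def PrnIs [DecidableEq V] (G : SimpleGraph V) (k : ℕ) : Prop :=
  IsLeast {n : ℕ | PermRepresents G n} k

/-- A comparability graph: a graph admitting a transitive orientation of its edges. -/
def IsComparability (G : SimpleGraph V) : Prop :=
  ∃ lt : V → V → Prop, Transitive lt ∧ (∀ a b, lt a b → G.Adj a b) ∧
    (∀ a b, G.Adj a b → (lt a b ↔ ¬ lt b a))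

/-- A module: every outside vertex is adjacent to all of `M` or to none of `M`. -/
def IsModule (G : SimpleGraph V) (M : Set V) : Prop :=
  ∀ x ∉ M, (∀ m ∈ M, G.Adj x m) ∨ (∀ m ∈ M, ¬ G.Adj x m)

end Defs

/-- The graph obtained from `G` by replacing the vertex `a` with the module `M`. -/
def substGraph {W V' : Type*} (G : SimpleGraph W) (a : W) (M : SimpleGraph V') :
    SimpleGraph ({x : W // x ≠ a} ⊕ V') where
  Adj x y :=
    match x, y with
    | Sum.inl u, Sum.inl v => G.Adj u.1 v.1
    | Sum.inl u, Sum.inr _ => G.Adj u.1 a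
    | Sum.inr _, Sum.inl v => G.Adj a v.1
    | Sum.inr u, Sum.inr v => M.Adj u v
  symm := ⟨by
    rintro (u | u) (v | v) h
    · exact h.symm
    · exact h.symm
    · exact h.symm
    · exact h.symm⟩
  loopless := ⟨by
    rintro (u | u) h
    · exact G.irrefl h
    · exact M.irrefl h⟩

/-- The quotient graph of a modular partition: parts are adjacent iff completely adjacent. -/
def quotientGraph {V : Type*} (G : SimpleGraph V) {n : ℕ} (Mod : Fin n → Set V) :
    SimpleGraph (Fin n) where
  Adj i j := i ≠ j ∧ ∀ a ∈ Mod i, ∀ b ∈ Mod j, G.Adj a b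
  symm := ⟨by
    rintro i j ⟨hij, h⟩
    exact ⟨hij.symm, fun a ha b hb => (h b hb a ha).symm⟩⟩
  loopless := ⟨by rintro i ⟨h, _⟩; exact h rfl⟩

/-- The lexicographical product of two graphs. -/
def lexProd {V V' : Type*} (G : SimpleGraph V) (G' : SimpleGraph V') :
    SimpleGraph (V × V') where
  Adj x y := G.Adj x.1 y.1 ∨ (x.1 = y.1 ∧ G'.Adj x.2 y.2)
  symm := ⟨by
    rintro ⟨a, a'⟩ ⟨b, b'⟩ (h | ⟨h1, h2⟩)
    · exact Or.inl h.symm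
    · exact Or.inr ⟨h1.symm, h2.symm⟩⟩
  loopless := ⟨by
    rintro ⟨a, a'⟩ (h | ⟨_, h⟩)
    · exact G.irrefl h
    · exact G'.irrefl h⟩

section ListLemmas
variable {α : Type*} {β : Type*}

lemma chain'_ne_map_iff (f : α → β) : ∀ {l : List α},
    (∀ x ∈ l, ∀ y ∈ l, f x = f y → x = y) →
    (List.Chain' (· ≠ ·) (l.map f) ↔ List.Chain' (· ≠ ·) l)
  | [], _ => by simp [List.Chain']
  | [a], _ => by simp [List.Chain']
  | a :: b :: l, h => by
    simp only [List.map_cons, List.Chain', List.isChain_cons_cons]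
    have ih := chain'_ne_map_iff f (l := b :: l)
      (fun x hx y hy => h x (List.mem_cons_of_mem _ hx) y (List.mem_cons_of_mem _ hy))
    constructor
    · rintro ⟨h1, h2⟩
      exact ⟨fun e => h1 (congrArg f e), ih.mp h2⟩
    · rintro ⟨h1, h2⟩
      refine ⟨fun e => h1 (h a (by simp) b (by simp) e), ih.mpr h2⟩

lemma filter_eq_singleton [DecidableEq α] {l : List α} {a : α} (hn : l.Nodup) (ha : a ∈ l) :
    l.filter (fun x => decide (x = a)) = [a] := by
  rw [List.filter_eq, List.count_eq_one_of_mem hn ha]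
  rfl

lemma filter_pair_eq [DecidableEq α] {p : List α} {a b : α} (hn : p.Nodup)
    (ha : a ∈ p) (hb : b ∈ p) (hab : a ≠ b) :
    p.filter (fun x => decide (x = a ∨ x = b)) = [a, b] ∨
    p.filter (fun x => decide (x = a ∨ x = b)) = [b, a] := by
  set t := p.filter (fun x => decide (x = a ∨ x = b)) with ht
  have htn : t.Nodup := hn.filter _
  have hat : a ∈ t := by rw [ht, List.mem_filter]; simp [ha]
  have hbt : b ∈ t := by rw [ht, List.mem_filter]; simp [hb]
  have hperm : t.Perm [a, b] := by
    rw [List.perm_iff_count]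
    intro x
    by_cases hxa : x = a
    · subst hxa
      rw [List.count_eq_one_of_mem htn hat]
      simp [hab]
    · by_cases hxb : x = b
      · subst hxb
        rw [List.count_eq_one_of_mem htn hbt]
        simp [hab, Ne.symm hab]
      · rw [List.count_eq_zero.mpr, List.count_eq_zero.mpr]
        · simp [hxa, hxb]
        · intro hx
          have := List.mem_filter.mp (ht ▸ hx)
          simp at this
          tauto
  have hlen : t.length = 2 := by rw [hperm.length_eq]; rfl
  obtain ⟨c, d, hcd⟩ := List.length_eq_two.mp hlen
  rw [hcd] at hperm ⊢
  have hc : c = a ∨ c = b := by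
    have := hperm.mem_iff.mp List.mem_cons_self
    simpa using this
  rcases hc with rfl | hcb
  · left
    have := (hperm.cons_inv).mem_iff.mp (List.mem_singleton_self _)
    simp at this
    rw [this]
  · subst hcb
    right
    have h2 : ([c, d] : List α).Perm [c, a] := hperm.trans (List.Perm.swap c a [])
    have := (h2.cons_inv).mem_iff.mp (List.mem_singleton_self _)
    simp at this
    rw [this]

lemma chain'_pad {x y : α} {u : List α} (hxy : x ≠ y) :
    List.Chain' (· ≠ ·) (x :: y :: x :: y :: u) ↔ List.Chain' (· ≠ ·) (x :: y :: u) := by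
  simp only [List.Chain', List.isChain_cons_cons, ne_eq, hxy, not_false_eq_true, true_and, Ne.symm hxy]

end ListLemmas
section Pad
variable {V : Type*} [DecidableEq V] {G : SimpleGraph V}

lemma permRep_pos [Nonempty V] {n : ℕ} (h : PermRepresents G n) : 0 < n := by
  obtain ⟨ps, hlen, _, hmem, _⟩ := h
  rcases Nat.eq_zero_or_pos n with rfl | h
  · rw [List.length_eq_zero_iff] at hlen
    subst hlen
    exact absurd (hmem (Classical.arbitrary V)) (by simp)
  · exact h

lemma permRep_succ {n : ℕ} (h : PermRepresents G n) (hn : 0 < n) :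
    PermRepresents G (n + 1) := by
  obtain ⟨ps, hlen, hperm, hmem, hadj⟩ := h
  cases ps with
  | nil => simp at hlen; omega
  | cons p ps' =>
    refine ⟨p :: p :: ps', by simpa using hlen, ?_, ?_, ?_⟩
    · intro q hq
      rcases List.mem_cons.mp hq with rfl | hq
      · exact hperm q (by simp)
      · exact hperm q hq
    · intro v
      have := hmem v
      simp only [List.flatten_cons, List.mem_append] at this ⊢
      tauto
    · intro a b hab
      rw [hadj a b hab]
      have hp := hperm p (by simp)
      rcases filter_pair_eq hp.1 (hp.2 a) (hp.2 b) hab with t12 | t12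
      all_goals {
        unfold Alternates
        simp only [List.flatten_cons, List.filter_append, t12]
        first
        | exact (chain'_pad hab).symm
        | exact (chain'_pad (Ne.symm hab)).symm
      }

lemma permRep_of_le {n m : ℕ} (h : PermRepresents G n) (hn : 0 < n) (hnm : n ≤ m) :
    PermRepresents G m := by
  induction m, hnm using Nat.le_induction with
  | base => exact h
  | succ m hm ih => exact permRep_succ ih (by omega)

end Pad
section Proj
variable {V V' : Type*} [DecidableEq V] [DecidableEq V']
  {G : SimpleGraph V} {G' : SimpleGraph V'} {n : ℕ}

lemma permRep_fst [Nonempty V'] (h : PermRepresents (lexProd G G') n) :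
    PermRepresents G n := by
  classical
  obtain ⟨rs, hlen, hperm, hmem, hadj⟩ := h
  set v' : V' := Classical.arbitrary V' with hv'
  have hre : (List.map (fun r => List.map Prod.fst
      (List.filter (fun x => decide (x.2 = v')) r)) rs).flatten
      = List.map Prod.fst (List.filter (fun x => decide (x.2 = v')) rs.flatten) := by
    rw [List.filter_flatten, List.map_flatten, List.map_map]
    rfl
  refine ⟨rs.map (fun r => (r.filter (fun x => decide (x.2 = v'))).map Prod.fst),
    by simpa using hlen, ?_, ?_, ?_⟩
  · intro p hp
    obtain ⟨r, hr, rfl⟩ := List.mem_map.mp hp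
    have hrp := hperm r hr
    constructor
    · refine List.Nodup.map_on ?_ (hrp.1.filter _)
      intro x hx y hy hxy
      have hx2 := of_decide_eq_true (List.mem_filter.mp hx).2
      have hy2 := of_decide_eq_true (List.mem_filter.mp hy).2
      exact Prod.ext hxy (hx2.trans hy2.symm)
    · intro v
      exact List.mem_map.mpr ⟨(v, v'), List.mem_filter.mpr ⟨hrp.2 (v, v'), by simp⟩, rfl⟩
  · intro v
    rw [hre]
    exact List.mem_map.mpr ⟨(v, v'), List.mem_filter.mpr ⟨hmem (v, v'), by simp⟩, rfl⟩
  · intro a b hab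
    have hne : (a, v') ≠ (b, v') := fun e => hab (congrArg Prod.fst e)
    rw [show G.Adj a b ↔ (lexProd G G').Adj (a, v') (b, v') by
      simp [lexProd]]
    rw [hadj _ _ hne]
    unfold Alternates
    rw [hre, List.filter_map, List.filter_filter]
    have hfc : List.filter
        (fun a_1 => ((fun x => decide (x = a ∨ x = b)) ∘ Prod.fst) a_1 &&
          decide (a_1.2 = v')) rs.flatten =
        List.filter (fun x => decide (x = (a, v') ∨ x = (b, v'))) rs.flatten := by
      apply List.filter_congr
      intro x _
      simp only [Function.comp, Bool.and_eq_true, decide_eq_true_eq, ← Bool.decide_and,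
        decide_eq_decide, Prod.ext_iff]
      tauto
    rw [hfc]
    rw [chain'_ne_map_iff]
    intro x hx y hy hxy
    have hx2 := of_decide_eq_true (List.mem_filter.mp hx).2
    have hy2 := of_decide_eq_true (List.mem_filter.mp hy).2
    rcases hx2 with rfl | rfl <;> rcases hy2 with rfl | rfl <;>
      simp_all [Prod.ext_iff]

lemma permRep_snd [Nonempty V] (h : PermRepresents (lexProd G G') n) :
    PermRepresents G' n := by
  classical
  obtain ⟨rs, hlen, hperm, hmem, hadj⟩ := h
  set v : V := Classical.arbitrary V with hv
  have hre : (List.map (fun r => List.map Prod.snd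
      (List.filter (fun x => decide (x.1 = v)) r)) rs).flatten
      = List.map Prod.snd (List.filter (fun x => decide (x.1 = v)) rs.flatten) := by
    rw [List.filter_flatten, List.map_flatten, List.map_map]
    rfl
  refine ⟨rs.map (fun r => (r.filter (fun x => decide (x.1 = v))).map Prod.snd),
    by simpa using hlen, ?_, ?_, ?_⟩
  · intro p hp
    obtain ⟨r, hr, rfl⟩ := List.mem_map.mp hp
    have hrp := hperm r hr
    constructor
    · refine List.Nodup.map_on ?_ (hrp.1.filter _)
      intro x hx y hy hxy
      have hx2 := of_decide_eq_true (List.mem_filter.mp hx).2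
      have hy2 := of_decide_eq_true (List.mem_filter.mp hy).2
      exact Prod.ext (hx2.trans hy2.symm) hxy
    · intro u
      exact List.mem_map.mpr ⟨(v, u), List.mem_filter.mpr ⟨hrp.2 (v, u), by simp⟩, rfl⟩
  · intro u
    rw [hre]
    exact List.mem_map.mpr ⟨(v, u), List.mem_filter.mpr ⟨hmem (v, u), by simp⟩, rfl⟩
  · intro a b hab
    have hne : (v, a) ≠ (v, b) := fun e => hab (congrArg Prod.snd e)
    rw [show G'.Adj a b ↔ (lexProd G G').Adj (v, a) (v, b) by
      simp [lexProd]]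
    rw [hadj _ _ hne]
    unfold Alternates
    rw [hre, List.filter_map, List.filter_filter]
    have hfc : List.filter
        (fun a_1 => ((fun x => decide (x = a ∨ x = b)) ∘ Prod.snd) a_1 &&
          decide (a_1.1 = v)) rs.flatten =
        List.filter (fun x => decide (x = (v, a) ∨ x = (v, b))) rs.flatten := by
      apply List.filter_congr
      intro x _
      simp only [Function.comp, Bool.and_eq_true, decide_eq_true_eq, ← Bool.decide_and,
        decide_eq_decide, Prod.ext_iff]
      tauto
    rw [hfc]
    rw [chain'_ne_map_iff]
    intro x hx y hy hxy
    have hx2 := of_decide_eq_true (List.mem_filter.mp hx).2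
    have hy2 := of_decide_eq_true (List.mem_filter.mp hy).2
    rcases hx2 with rfl | rfl <;> rcases hy2 with rfl | rfl <;>
      simp_all [Prod.ext_iff]

end Proj
section Prod
variable {V V' : Type*} [DecidableEq V] [DecidableEq V']

/-- Block filter for the case of distinct first coordinates. -/
lemma block_filter_ne {q : List V'} {a b : V} {a' b' : V'} (c : V)
    (hq : q.Nodup) (ha' : a' ∈ q) (hb' : b' ∈ q) (hab : a ≠ b) :
    (q.map (fun y => (c, y))).filter (fun x => decide (x = (a, a') ∨ x = (b, b'))) =
      if c = a then [(a, a')] else if c = b then [(b, b')] else [] := by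
  rw [List.filter_map]
  by_cases hca : c = a
  · subst hca
    rw [if_pos rfl]
    have : List.filter ((fun x => decide (x = (c, a') ∨ x = (b, b'))) ∘ (fun y => (c, y))) q
        = List.filter (fun y => decide (y = a')) q := by
      apply List.filter_congr
      intro y _
      simp only [Function.comp, decide_eq_decide, Prod.ext_iff]
      constructor
      · rintro (⟨_, h⟩ | ⟨h1, _⟩)
        · exact h
        · exact absurd h1 hab
      · intro h; exact Or.inl ⟨by trivial, h⟩
    rw [this, filter_eq_singleton hq ha']
    rfl
  · by_cases hcb : c = b
    · subst hcb
      rw [if_neg hca, if_pos rfl]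
      have : List.filter ((fun x => decide (x = (a, a') ∨ x = (c, b'))) ∘ (fun y => (c, y))) q
          = List.filter (fun y => decide (y = b')) q := by
        apply List.filter_congr
        intro y _
        simp only [Function.comp, decide_eq_decide, Prod.ext_iff]
        constructor
        · rintro (⟨h1, _⟩ | ⟨_, h⟩)
          · exact absurd h1 hca
          · exact h
        · intro h; exact Or.inr ⟨by trivial, h⟩
      rw [this, filter_eq_singleton hq hb']
      rfl
    · rw [if_neg hca, if_neg hcb]
      have : List.filter ((fun x => decide (x = (a, a') ∨ x = (b, b'))) ∘ (fun y => (c, y))) q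
          = List.filter (fun _ => false) q := by
        apply List.filter_congr
        intro y _
        simp only [Function.comp, Prod.ext_iff, decide_eq_false_iff_not]
        tauto
      rw [this, List.filter_false]
      rfl

/-- Product filter, distinct first coordinates. -/
lemma product_filter_ne {p : List V} {q : List V'} {a b : V} {a' b' : V'}
    (hq : q.Nodup) (ha' : a' ∈ q) (hb' : b' ∈ q) (hab : a ≠ b) :
    (p ×ˢ q).filter (fun x => decide (x = (a, a') ∨ x = (b, b'))) =
      (p.filter (fun c => decide (c = a ∨ c = b))).map
        (fun c => (c, if c = a then a' else b')) := by
  induction p with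
  | nil => simp
  | cons c p ih =>
    rw [List.product_cons, List.filter_append, ih,
      block_filter_ne c hq ha' hb' hab, List.filter_cons]
    by_cases hca : c = a
    · subst hca
      simp [hab]
    · by_cases hcb : c = b
      · subst hcb
        simp [hca, Ne.symm hab]
      · simp [hca, hcb]

/-- Block filter, same first coordinate. -/
lemma block_filter_eq {q : List V'} {a : V} {a' b' : V'} (c : V) :
    (q.map (fun y => (c, y))).filter (fun x => decide (x = (a, a') ∨ x = (a, b'))) =
      if c = a then (q.filter (fun y => decide (y = a' ∨ y = b'))).map (fun y => (a, y))
      else [] := by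
  rw [List.filter_map]
  by_cases hca : c = a
  · subst hca
    rw [if_pos rfl]
    congr 1
    apply List.filter_congr
    intro y _
    simp only [Function.comp, decide_eq_decide, Prod.ext_iff]
    tauto
  · rw [if_neg hca]
    have : List.filter ((fun x => decide (x = (a, a') ∨ x = (a, b'))) ∘ (fun y => (c, y))) q
        = List.filter (fun _ => false) q := by
      apply List.filter_congr
      intro y _
      simp only [Function.comp, Prod.ext_iff, decide_eq_false_iff_not]
      tauto
    rw [this, List.filter_false]
    rfl

lemma product_filter_eq_of_not_mem {p : List V} {q : List V'} {a : V} {a' b' : V'}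
    (hap : a ∉ p) :
    (p ×ˢ q).filter (fun x => decide (x = (a, a') ∨ x = (a, b'))) = [] := by
  induction p with
  | nil => simp
  | cons c p ih =>
    rw [List.product_cons, List.filter_append, block_filter_eq c,
      if_neg (by rintro rfl; exact hap (by simp)), List.nil_append]
    exact ih (fun h => hap (List.mem_cons_of_mem _ h))

/-- Product filter, same first coordinate. -/
lemma product_filter_eq {p : List V} {q : List V'} {a : V} {a' b' : V'}
    (hp : p.Nodup) (ha : a ∈ p) :
    (p ×ˢ q).filter (fun x => decide (x = (a, a') ∨ x = (a, b'))) =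
      (q.filter (fun y => decide (y = a' ∨ y = b'))).map (fun y => (a, y)) := by
  induction p with
  | nil => simp at ha
  | cons c p ih =>
    rw [List.product_cons, List.filter_append, block_filter_eq c]
    by_cases hca : c = a
    · subst hca
      rw [if_pos rfl, product_filter_eq_of_not_mem (List.nodup_cons.mp hp).1,
        List.append_nil]
    · rw [if_neg hca, List.nil_append]
      exact ih (List.nodup_cons.mp hp).2 (by rcases List.mem_cons.mp ha with rfl | h <;> tauto)

end Prod
section Combine
variable {V V' : Type*} [DecidableEq V] [DecidableEq V']

lemma zip_product_filter_fst {ps : List (List V)} {qs : List (List V')}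
    (hlen : ps.length = qs.length) (P : V × V' → Bool) (Q : V → Bool) (g : V → V × V')
    (hblock : ∀ pq ∈ ps.zip qs, List.filter P (pq.1 ×ˢ pq.2) = (List.filter Q pq.1).map g) :
    ((ps.zip qs).map (fun pq => pq.1 ×ˢ pq.2)).flatten.filter P =
      (ps.flatten.filter Q).map g := by
  rw [List.filter_flatten, List.map_map, List.filter_flatten, List.map_flatten,
    List.map_map]
  congr 1
  have hps : List.map (List.map g ∘ List.filter Q) ps
      = List.map ((List.map g ∘ List.filter Q) ∘ Prod.fst) (ps.zip qs) := by
    conv_rhs => rw [← List.map_map]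
    rw [List.map_fst_zip (le_of_eq hlen)]
  rw [hps]
  apply List.map_congr_left
  intro pq hpq
  exact hblock pq hpq

lemma zip_product_filter_snd {ps : List (List V)} {qs : List (List V')}
    (hlen : ps.length = qs.length) (P : V × V' → Bool) (Q : V' → Bool) (g : V' → V × V')
    (hblock : ∀ pq ∈ ps.zip qs, List.filter P (pq.1 ×ˢ pq.2) = (List.filter Q pq.2).map g) :
    ((ps.zip qs).map (fun pq => pq.1 ×ˢ pq.2)).flatten.filter P =
      (qs.flatten.filter Q).map g := by
  rw [List.filter_flatten, List.map_map, List.filter_flatten, List.map_flatten,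
    List.map_map]
  congr 1
  have hps : List.map (List.map g ∘ List.filter Q) qs
      = List.map ((List.map g ∘ List.filter Q) ∘ Prod.snd) (ps.zip qs) := by
    conv_rhs => rw [← List.map_map]
    rw [List.map_snd_zip (le_of_eq hlen.symm)]
  rw [hps]
  apply List.map_congr_left
  intro pq hpq
  exact hblock pq hpq

lemma permRep_lexProd {G : SimpleGraph V} {G' : SimpleGraph V'} {n : ℕ}
    (hG : PermRepresents G n) (hG' : PermRepresents G' n) (hn : 0 < n) :
    PermRepresents (lexProd G G') n := by
  obtain ⟨ps, hplen, hpperm, hpmem, hpadj⟩ := hG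
  obtain ⟨qs, hqlen, hqperm, hqmem, hqadj⟩ := hG'
  have hzl : ps.length = qs.length := by rw [hplen, hqlen]
  set rs : List (List (V × V')) := (ps.zip qs).map (fun pq => pq.1 ×ˢ pq.2) with hrs
  have hrsperm : ∀ r ∈ rs, IsPermOn r := by
    intro r hr
    obtain ⟨pq, hpq, rfl⟩ := List.mem_map.mp hr
    have h1 := List.of_mem_zip hpq
    have hp := hpperm _ h1.1
    have hq := hqperm _ h1.2
    refine ⟨hp.1.product hq.1, ?_⟩
    rintro ⟨x, x'⟩
    exact List.pair_mem_product.mpr ⟨hp.2 x, hq.2 x'⟩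
  refine ⟨rs, ?_, hrsperm, ?_, ?_⟩
  · rw [hrs, List.length_map, List.length_zip, hplen, hqlen, min_self]
  · intro v
    have hne : rs ≠ [] := by
      have : rs.length = n := by rw [hrs, List.length_map, List.length_zip, hplen, hqlen, min_self]
      intro h
      rw [h] at this
      simp at this
      omega
    obtain ⟨r, hr⟩ := List.exists_mem_of_ne_nil rs hne
    exact List.mem_flatten.mpr ⟨r, hr, (hrsperm r hr).2 v⟩
  · rintro ⟨a, a'⟩ ⟨b, b'⟩ hne
    by_cases hab : a = b
    · subst hab
      have hab' : a' ≠ b' := by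
        intro h
        exact hne (by rw [h])
      have hadj : (lexProd G G').Adj (a, a') (a, b') ↔ G'.Adj a' b' := by
        simp [lexProd]
      rw [hadj, hqadj a' b' hab']
      unfold Alternates
      rw [zip_product_filter_snd hzl _ (fun y => decide (y = a' ∨ y = b'))
        (fun y => (a, y)) ?hb]
      case hb =>
        intro pq hpq
        have hp := hpperm _ (List.of_mem_zip hpq).1
        exact product_filter_eq hp.1 (hp.2 a)
      rw [chain'_ne_map_iff]
      intro x _ y _ hxy
      exact congrArg Prod.snd hxy
    · have hadj : (lexProd G G').Adj (a, a') (b, b') ↔ G.Adj a b := by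
        simp [lexProd, hab]
      rw [hadj, hpadj a b hab]
      unfold Alternates
      rw [zip_product_filter_fst hzl _ (fun c => decide (c = a ∨ c = b))
        (fun c => (c, if c = a then a' else b')) ?hb]
      case hb =>
        intro pq hpq
        have hq := hqperm _ (List.of_mem_zip hpq).2
        exact product_filter_ne hq.1 (hq.2 a') (hq.2 b') hab
      rw [chain'_ne_map_iff]
      intro x _ y _ hxy
      exact congrArg Prod.fst hxy

end Combine
section Comp
variable {V V' : Type*}

lemma comparability_lexProd [Nonempty V] [Nonempty V']
    {G : SimpleGraph V} {G' : SimpleGraph V'} :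
    IsComparability (lexProd G G') ↔ (IsComparability G ∧ IsComparability G') := by
  constructor
  · rintro ⟨lt, htr, hadj, hiff⟩
    constructor
    · set v' : V' := Classical.arbitrary V'
      refine ⟨fun a b => lt (a, v') (b, v'), fun _ _ _ h1 h2 => htr h1 h2, ?_, ?_⟩
      · intro a b h
        have := hadj _ _ h
        rcases this with h' | ⟨h1, h2⟩
        · exact h'
        · exact absurd h2 (G'.irrefl)
      · intro a b h
        exact hiff (a, v') (b, v') (Or.inl h)
    · set v : V := Classical.arbitrary V
      refine ⟨fun a' b' => lt (v, a') (v, b'), fun _ _ _ h1 h2 => htr h1 h2, ?_, ?_⟩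
      · intro a' b' h
        have := hadj _ _ h
        rcases this with h' | ⟨_, h2⟩
        · exact absurd h' (G.irrefl)
        · exact h2
      · intro a' b' h
        exact hiff (v, a') (v, b') (Or.inr ⟨rfl, h⟩)
  · rintro ⟨⟨lt, htr, hadj, hiff⟩, ⟨lt', htr', hadj', hiff'⟩⟩
    refine ⟨fun x y => lt x.1 y.1 ∨ (x.1 = y.1 ∧ lt' x.2 y.2), ?_, ?_, ?_⟩
    · rintro x y z (h1 | ⟨h1, h1'⟩) (h2 | ⟨h2, h2'⟩)
      · exact Or.inl (htr h1 h2)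
      · exact Or.inl (h2 ▸ h1)
      · exact Or.inl (h1 ▸ h2)
      · exact Or.inr ⟨h1.trans h2, htr' h1' h2'⟩
    · rintro x y (h | ⟨h1, h2⟩)
      · exact Or.inl (hadj _ _ h)
      · exact Or.inr ⟨h1, hadj' _ _ h2⟩
    · rintro ⟨a, a'⟩ ⟨b, b'⟩ (h | ⟨h1, h2⟩)
      · have hne : a ≠ b := (G.ne_of_adj h)
        have := hiff a b h
        simp only at *
        constructor
        · rintro (h3 | ⟨h3, _⟩)
          · rintro (h4 | ⟨h4, _⟩)
            · exact (this.mp h3) h4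
            · exact hne h4.symm
          · exact absurd h3 hne
        · intro h3
          left
          apply this.mpr
          intro h4
          exact h3 (Or.inl h4)
      · simp only at h1
        subst h1
        have hnlt : ¬ lt a a := fun h' => G.irrefl (hadj _ _ h')
        have := hiff' a' b' h2
        simp only at *
        constructor
        · rintro (h3 | ⟨_, h3⟩)
          · exact absurd h3 hnlt
          · rintro (h4 | ⟨_, h4⟩)
            · exact hnlt h4
            · exact (this.mp h3) h4
        · intro h3
          right
          refine ⟨by trivial, this.mpr ?_⟩
          intro h4
          exact h3 (Or.inr ⟨by trivial, h4⟩)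

end Comp
/-- `G[G']` is a comparability graph iff both `G` and `G'` are; moreover in
that case `R^p(G[G']) = max {R^p(G), R^p(G')}`. -/
theorem stmt14 {V V' : Type*} [DecidableEq V] [DecidableEq V'] [Fintype V] [Fintype V']
    [Nonempty V] [Nonempty V'] (G : SimpleGraph V) (G' : SimpleGraph V') :
    (IsComparability (lexProd G G') ↔ (IsComparability G ∧ IsComparability G')) ∧
    (∀ k k' : ℕ, PrnIs G k → PrnIs G' k' →
      PrnIs (lexProd G G') (max k k')) := by
  refine ⟨comparability_lexProd, ?_⟩
  intro k k' hk hk'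
  have hkpos : 0 < k := permRep_pos hk.1
  have hk'pos : 0 < k' := permRep_pos hk'.1
  constructor
  · exact permRep_lexProd
      (permRep_of_le hk.1 hkpos (le_max_left k k'))
      (permRep_of_le hk'.1 hk'pos (le_max_right k k'))
      (lt_of_lt_of_le hkpos (le_max_left k k'))
  · intro n hn
    exact max_le (hk.2 (permRep_fst hn)) (hk'.2 (permRep_snd hn))
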